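/- With M defined as above, if a1 ≥ 1 (i.e., x divides m1), then M(m1,m2) = b2·M(m1/x, m2/y) − c2·M(m1/x, m2/z), where a term is interpreted as 0 if the corresponding exponent b2 or c2 is 0. -/

import Mathlib

/-- Binomial coefficient `C(n, k)` with an integer lower argument, `0` when `k < 0` or `k > n`. -/
def intChoose (n : ℕ) (k : ℤ) : ℤ :=
  if 0 ≤ k then (n.choose k.toNat : ℤ) else 0

/-- `M(m1, m2)` for monomials `m1 = x^{a1}y^{b1}z^{c1}`, `m2 = x^{a2}y^{b2}z^{c2}` of degree `n`:
`M(m1,m2) = (-1)^{a2+b3+c1}·a1!·b1!·c1!·Σ_α (-1)^α·C(a2,α)·C(b2,c1-α)·C(c2,b3-α)`,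
where `b3 = n-b1-b2`.  The sum over `α` is restricted to `0 ≤ α ≤ a2`, outside of which
all summands vanish. -/
def Mform (n a1 b1 c1 a2 b2 c2 : ℕ) : ℤ :=
  (-1) ^ (((a2 : ℤ) + ((n : ℤ) - b1 - b2) + c1).natAbs) *
    (a1.factorial * b1.factorial * c1.factorial) *
    ∑ α ∈ Finset.range (a2 + 1),
      (-1) ^ α * intChoose a2 α * intChoose b2 ((c1 : ℤ) - α) *
        intChoose c2 (((n : ℤ) - b1 - b2) - α)


lemma key2 (c : ℕ) (j : ℤ) : (c:ℤ) * intChoose (c-1) (j-1) = j * intChoose c j := by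
  unfold intChoose
  rcases le_or_gt 1 j with hj | hj
  · rw [if_pos (by omega), if_pos (by omega)]
    cases c with
    | zero =>
      rw [Nat.choose_eq_zero_of_lt (by omega : 0 < j.toNat)]; simp
    | succ c =>
      simp only [Nat.add_sub_cancel]
      have h1 : j.toNat = (j-1).toNat + 1 := by omega
      rw [h1]
      have := Nat.add_one_mul_choose_eq c ((j-1).toNat)
      have hcast : ((c+1 : ℕ):ℤ) * (c.choose ((j-1).toNat) : ℤ)
          = ((c+1).choose ((j-1).toNat + 1) : ℤ) * (((j-1).toNat : ℕ) + 1 : ℤ) := by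
        exact_mod_cast congrArg (Nat.cast : ℕ → ℤ) this
      push_cast at hcast ⊢
      rw [hcast]
      have : ((j-1).toNat : ℤ) = j - 1 := by omega
      rw [this]; ring
  · rw [if_neg (by omega)]
    rcases lt_or_eq_of_le (by omega : j ≤ 0) with h | h
    · rw [if_neg (by omega)]; ring
    · subst h; simp

lemma key1 (b : ℕ) (k : ℤ) : (b:ℤ) * intChoose (b-1) k = ((b:ℤ) - k) * intChoose b k := by
  unfold intChoose
  rcases le_or_gt 0 k with hk | hk
  · rw [if_pos hk, if_pos hk]
    cases b with
    | zero =>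
      simp only [Nat.cast_zero, zero_mul, Nat.choose]
      rcases Nat.eq_zero_or_pos k.toNat with h | h
      · have : k = 0 := by omega
        subst this; simp
      · rw [Nat.choose_eq_zero_of_lt (by omega)]; simp
    | succ b =>
      simp only [Nat.add_sub_cancel]
      rcases le_or_gt k.toNat (b+1) with h | h
      · have := Nat.choose_mul_succ_eq b k.toNat
        have hcast : (b.choose k.toNat : ℤ) * ((b:ℤ)+1) = ((b+1).choose k.toNat : ℤ) * (((b+1-k.toNat : ℕ)) : ℤ) := by exact_mod_cast congrArg (Nat.cast : ℕ → ℤ) this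
        have h2 : (((b+1-k.toNat : ℕ)) : ℤ) = (b:ℤ) + 1 - k := by omega
        rw [h2] at hcast
        push_cast
        linarith [hcast]
      · rw [Nat.choose_eq_zero_of_lt (by omega), Nat.choose_eq_zero_of_lt (by omega)]
        simp
  · rw [if_neg (by omega), if_neg (by omega)]; ring

lemma signflip (t : ℤ) : (-1:ℤ)^((t-1).natAbs) = -(-1:ℤ)^(t.natAbs) := by
  rcases Int.even_or_odd t with h | h
  · have h1 : ¬ Even (t-1) := by simp [Int.even_sub_one]; exact h
    rw [(Int.natAbs_even.mpr h).neg_one_pow,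
        (Nat.not_even_iff_odd.mp (fun c => h1 (Int.natAbs_even.mp c))).neg_one_pow]
  · have h1 : Even (t-1) := by
      rcases h with ⟨m, hm⟩; exact ⟨m, by omega⟩
    rw [(Int.natAbs_even.mpr h1).neg_one_pow,
        (Nat.not_even_iff_odd.mp (fun c => (Int.not_odd_iff_even.mpr (Int.natAbs_even.mp c)) h)).neg_one_pow]
    ring

/-- If `x` divides `m1` (that is, `a1 ≥ 1`), then
`M(m1, m2) = b2·M(m1/x, m2/y) − c2·M(m1/x, m2/z)`, where a term is interpreted
as `0` when the corresponding exponent `b2` or `c2` is `0` (the coefficient then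
vanishes, so natural subtraction in the exponents is harmless). -/
theorem statement4 (n a1 b1 c1 a2 b2 c2 : ℕ)
    (h1 : a1 + b1 + c1 = n) (h2 : a2 + b2 + c2 = n) (ha1 : 1 ≤ a1) :
    Mform n a1 b1 c1 a2 b2 c2 =
      (b2 : ℤ) * Mform (n - 1) (a1 - 1) b1 c1 a2 (b2 - 1) c2 -
        (c2 : ℤ) * Mform (n - 1) (a1 - 1) b1 c1 a2 b2 (c2 - 1) := by
  have hn : 1 ≤ n := by omega
  set S : ℕ := (((a2 : ℤ) + ((n : ℤ) - b1 - b2) + c1)).natAbs with hS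
  have LHSeq : Mform n a1 b1 c1 a2 b2 c2 =
      (-1)^S * (((a1-1).factorial : ℤ) * b1.factorial * c1.factorial) *
      ∑ α ∈ Finset.range (a2+1), (a1:ℤ) *
        ((-1)^α * intChoose a2 α * intChoose b2 ((c1:ℤ)-α)
          * intChoose c2 (((n:ℤ) - b1 - b2) - α)) := by
    unfold Mform
    have hf : a1.factorial = a1 * (a1-1).factorial :=
      (Nat.mul_factorial_pred (show a1 ≠ 0 by omega)).symm
    rw [hf, ← Finset.mul_sum]
    push_cast; ring
  have hb : (b2:ℤ) * Mform (n-1) (a1-1) b1 c1 a2 (b2-1) c2 =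
      (-1)^S * (((a1-1).factorial : ℤ) * b1.factorial * c1.factorial) *
      ∑ α ∈ Finset.range (a2+1), (b2:ℤ) *
        ((-1)^α * intChoose a2 α * intChoose (b2-1) ((c1:ℤ)-α)
          * intChoose c2 (((n:ℤ) - b1 - b2) - α)) := by
    cases b2 with
    | zero => simp
    | succ k =>
      unfold Mform
      have e1 : ((a2:ℤ) + (((n-1:ℕ):ℤ) - b1 - ((k+1-1 : ℕ):ℤ)) + c1)
          = (a2:ℤ) + ((n:ℤ) - b1 - (k+1:ℕ)) + c1 := by push_cast; omega
      have e2 : ∀ α : ℕ, (((n-1:ℕ):ℤ) - b1 - ((k+1-1:ℕ):ℤ)) - α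
          = ((n:ℤ) - b1 - (k+1:ℕ)) - α := by intro α; push_cast; omega
      rw [show (((a2:ℤ) + (((n-1:ℕ):ℤ) - b1 - ((k+1-1 : ℕ):ℤ)) + c1)).natAbs = S from
        hS ▸ congrArg Int.natAbs e1]
      conv_lhs => rw [Finset.sum_congr rfl (fun α _ => by rw [e2 α])]
      conv_rhs => rw [← Finset.mul_sum]
      ring
  have hc : (c2:ℤ) * Mform (n-1) (a1-1) b1 c1 a2 b2 (c2-1) =
      -((-1)^S) * (((a1-1).factorial : ℤ) * b1.factorial * c1.factorial) *
      ∑ α ∈ Finset.range (a2+1), (c2:ℤ) *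
        ((-1)^α * intChoose a2 α * intChoose b2 ((c1:ℤ)-α)
          * intChoose (c2-1) ((((n:ℤ) - b1 - b2) - α) - 1)) := by
    cases c2 with
    | zero => simp
    | succ k =>
      unfold Mform
      have e1 : ((a2:ℤ) + (((n-1:ℕ):ℤ) - b1 - b2) + c1)
          = ((a2:ℤ) + ((n:ℤ) - b1 - b2) + c1) - 1 := by push_cast; omega
      have e2 : ∀ α : ℕ, (((n-1:ℕ):ℤ) - b1 - b2) - α
          = (((n:ℤ) - b1 - b2) - α) - 1 := by intro α; push_cast; omega
      rw [show (((a2:ℤ) + (((n-1:ℕ):ℤ) - b1 - b2) + c1)).natAbs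
          = (((a2:ℤ) + ((n:ℤ) - b1 - b2) + c1) - 1).natAbs from congrArg Int.natAbs e1]
      rw [signflip]
      conv_lhs => rw [Finset.sum_congr rfl (fun α _ => by rw [e2 α])]
      conv_rhs => rw [← Finset.mul_sum]
      rw [hS]
      ring
  rw [LHSeq, hb, hc]
  have key : ∀ α ∈ Finset.range (a2+1),
      (a1:ℤ) * ((-1)^α * intChoose a2 α * intChoose b2 ((c1:ℤ)-α)
          * intChoose c2 (((n:ℤ) - b1 - b2) - α))
      = (b2:ℤ) * ((-1)^α * intChoose a2 α * intChoose (b2-1) ((c1:ℤ)-α)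
          * intChoose c2 (((n:ℤ) - b1 - b2) - α))
        + (c2:ℤ) * ((-1)^α * intChoose a2 α * intChoose b2 ((c1:ℤ)-α)
          * intChoose (c2-1) ((((n:ℤ) - b1 - b2) - α) - 1)) := by
    intro α _
    have e1 := key1 b2 ((c1:ℤ) - α)
    have e2 := key2 c2 (((n:ℤ) - b1 - b2) - α)
    have ha : (a1:ℤ) = (b2:ℤ) + ((n:ℤ) - b1 - b2) - c1 := by push_cast; omega
    linear_combination (-((-1:ℤ)^α * intChoose a2 α * intChoose c2 (((n:ℤ) - b1 - b2) - α))) * e1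
      - ((-1:ℤ)^α * intChoose a2 α * intChoose b2 ((c1:ℤ)-α)) * e2
      + ((-1:ℤ)^α * intChoose a2 α * intChoose b2 ((c1:ℤ)-α)
          * intChoose c2 (((n:ℤ) - b1 - b2) - α)) * ha
  rw [Finset.sum_congr rfl key, Finset.sum_add_distrib]
  ring
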